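/- If H is an r-uniform hypergraph on n vertices whose minimum positive co-degree exceeds n/r, then H contains an r-triangle T^r, i.e., there exist r+1 vertices v_1,...,v_{r+1} such that v_1...v_r, v_1...v_{r-1}v_{r+1}, and v_1...v_{r-2}v_r v_{r+1} are all edges of H. -/

import Mathlib

set_option maxHeartbeats 1000000


/-- If `H` is an `r`-uniform hypergraph on `n` vertices whose minimum
positive co-degree exceeds `n/r`, then `H` contains an `r`-triangle `T^r`:
there are `r+1` distinct vertices `v 0, ..., v r` such that the three `r`-sets
obtained by omitting `v r`, `v (r-1)`, `v (r-2)` respectively are all edges. -/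
theorem stmt_0 (r n : ℕ) (hr : 2 ≤ r) (H : Finset (Finset (Fin n)))
    (huniform : ∀ e ∈ H, e.card = r) (hne : H.Nonempty)
    (hcodeg : ∀ S : Finset (Fin n), S.card = r - 1 → (∃ e ∈ H, S ⊆ e) →
      (n : ℝ) / r < ((H.filter (fun e => S ⊆ e)).card : ℝ)) :
    ∃ v : Fin (r + 1) → Fin n, Function.Injective v ∧
      (Finset.univ.erase (⟨r, by omega⟩ : Fin (r + 1))).image v ∈ H ∧
      (Finset.univ.erase (⟨r - 1, by omega⟩ : Fin (r + 1))).image v ∈ H ∧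
      (Finset.univ.erase (⟨r - 2, by omega⟩ : Fin (r + 1))).image v ∈ H := by
  classical
  obtain ⟨e, he⟩ := hne
  have hecard : e.card = r := huniform e he
  set N : Fin n → Finset (Fin n) := fun a =>
    Finset.univ.filter (fun u => u ∉ e.erase a ∧ insert u (e.erase a) ∈ H) with hN
  have hNcard : ∀ a ∈ e, (n : ℝ) / r < ((N a).card : ℝ) := by
    intro a ha
    have hS : (e.erase a).card = r - 1 := by rw [Finset.card_erase_of_mem ha, hecard]
    have hfilt := hcodeg (e.erase a) hS ⟨e, he, Finset.erase_subset _ _⟩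
    have hsub : H.filter (fun f => e.erase a ⊆ f) ⊆
        (N a).image (fun u => insert u (e.erase a)) := by
      intro f hf
      rw [Finset.mem_filter] at hf
      obtain ⟨hfH, hSf⟩ := hf
      have hcard1 : (f \ e.erase a).card = 1 := by
        rw [Finset.card_sdiff_of_subset hSf, huniform f hfH, hS]; omega
      obtain ⟨u, hu⟩ := Finset.card_eq_one.mp hcard1
      have huf : u ∈ f \ e.erase a := hu ▸ Finset.mem_singleton_self u
      rw [Finset.mem_sdiff] at huf
      have hfeq : f = insert u (e.erase a) := by
        apply Finset.Subset.antisymm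
        · intro x hx
          by_cases hxS : x ∈ e.erase a
          · exact Finset.mem_insert_of_mem hxS
          · have : x ∈ f \ e.erase a := Finset.mem_sdiff.mpr ⟨hx, hxS⟩
            rw [hu, Finset.mem_singleton] at this
            simp [this]
        · exact Finset.insert_subset huf.1 hSf
      refine Finset.mem_image.mpr ⟨u, ?_, hfeq.symm⟩
      simp only [hN, Finset.mem_filter, Finset.mem_univ, true_and]
      exact ⟨huf.2, hfeq ▸ hfH⟩
    calc (n:ℝ)/r < _ := hfilt
      _ ≤ ((N a).card : ℝ) := by
        exact_mod_cast le_trans (Finset.card_le_card hsub) Finset.card_image_le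
  have hex : ∃ a ∈ e, ∃ b ∈ e, a ≠ b ∧ ∃ u, u ∈ N a ∧ u ∈ N b := by
    by_contra hcon
    push_neg at hcon
    have hdisj : ∀ a ∈ e, ∀ b ∈ e, a ≠ b → Disjoint (N a) (N b) := by
      intro a ha b hb hab
      rw [Finset.disjoint_left]
      intro u hua hub
      exact hcon a ha b hb hab u hua hub
    have hsum : ∑ a ∈ e, (N a).card = (e.biUnion N).card :=
      (Finset.card_biUnion hdisj).symm
    have hle : ∑ a ∈ e, (N a).card ≤ n := by
      rw [hsum]
      simpa using Finset.card_le_univ (e.biUnion N)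
    have hlt : (n : ℝ) < ∑ a ∈ e, ((N a).card : ℝ) := by
      have hne' : e.Nonempty := Finset.card_pos.mp (by omega)
      have h1 := Finset.sum_lt_sum_of_nonempty hne' (fun a ha => hNcard a ha)
      calc (n:ℝ) = ∑ _a ∈ e, (n:ℝ)/r := by
            rw [Finset.sum_const, hecard, nsmul_eq_mul]
            field_simp
        _ < _ := h1
    have h2 : (n : ℝ) < ((∑ a ∈ e, (N a).card : ℕ) : ℝ) := by push_cast; exact hlt
    have h3 : n < ∑ a ∈ e, (N a).card := by exact_mod_cast h2
    omega
  obtain ⟨a, ha, b, hb, hab, u, hua, hub⟩ := hex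
  simp only [hN, Finset.mem_filter, Finset.mem_univ, true_and] at hua hub
  obtain ⟨huA, heA⟩ := hua
  obtain ⟨huB, heB⟩ := hub
  have hue : u ∉ e := by
    intro h
    have h1 : u = a := by
      by_contra h'; exact huA (Finset.mem_erase.mpr ⟨h', h⟩)
    have h2 : u = b := by
      by_contra h'; exact huB (Finset.mem_erase.mpr ⟨h', h⟩)
    exact hab (h1 ▸ h2 ▸ rfl)
  have hua' : u ≠ a := fun h => hue (h ▸ ha)
  have hub' : u ≠ b := fun h => hue (h ▸ hb)
  set core : Finset (Fin n) := (e.erase a).erase b with hcoredef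
  have hbea : b ∈ e.erase a := Finset.mem_erase.mpr ⟨hab.symm, hb⟩
  have hcore : core.card = r - 2 := by
    rw [hcoredef, Finset.card_erase_of_mem hbea, Finset.card_erase_of_mem ha, hecard]
    omega
  set σ := core.orderIsoOfFin hcore with hσ
  set v : Fin (r+1) → Fin n := fun k =>
    if h : (k:ℕ) < r - 2 then (σ ⟨k, h⟩ : Fin n)
    else if (k:ℕ) = r - 2 then b
    else if (k:ℕ) = r - 1 then a
    else u with hvdef
  have hcsub : core ⊆ e := (Finset.erase_subset _ _).trans (Finset.erase_subset _ _)
  have hvr : v ⟨r, by omega⟩ = u := by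
    rw [hvdef]; simp only
    rw [dif_neg (by omega), if_neg (by omega), if_neg (by omega)]
  have hvr1 : v ⟨r - 1, by omega⟩ = a := by
    rw [hvdef]; simp only
    rw [dif_neg (by omega), if_neg (by omega)]
    simp
  have hvr2 : v ⟨r - 2, by omega⟩ = b := by
    rw [hvdef]; simp only
    rw [dif_neg (by omega)]
    simp
  have himg : Finset.univ.image v = insert u e := by
    ext x
    simp only [Finset.mem_image, Finset.mem_univ, true_and, Finset.mem_insert]
    constructor
    · rintro ⟨k, hk⟩
      rw [hvdef] at hk; simp only at hk
      split_ifs at hk with h1 h2 h3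
      · right; exact hcsub (hk ▸ (σ ⟨k, h1⟩).2)
      · right; exact hk ▸ hb
      · right; exact hk ▸ ha
      · left; exact hk.symm
    · rintro (rfl | hx)
      · exact ⟨⟨r, by omega⟩, hvr⟩
      · by_cases hxa : x = a
        · exact ⟨⟨r - 1, by omega⟩, hvr1.trans hxa.symm⟩
        by_cases hxb : x = b
        · exact ⟨⟨r - 2, by omega⟩, hvr2.trans hxb.symm⟩
        have hxc : x ∈ core := Finset.mem_erase.mpr ⟨hxb, Finset.mem_erase.mpr ⟨hxa, hx⟩⟩
        set k := σ.symm ⟨x, hxc⟩ with hk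
        refine ⟨⟨(k : ℕ), by omega⟩, ?_⟩
        rw [hvdef]; simp only
        rw [dif_pos (show ((⟨(k:ℕ), by omega⟩ : Fin (r+1)) : ℕ) < r - 2 from k.2)]
        show ((σ ⟨(k:ℕ), k.2⟩ : core) : Fin n) = x
        rw [Fin.eta, hk, OrderIso.apply_symm_apply]
  have hinj : Function.Injective v := by
    have hc1 : (Finset.univ.image v).card = (Finset.univ : Finset (Fin (r+1))).card := by
      rw [himg, Finset.card_insert_of_notMem hue, hecard]
      simp
    have := Finset.card_image_iff.mp hc1
    rw [Finset.coe_univ] at this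
    exact fun x y hxy => this (Set.mem_univ x) (Set.mem_univ y) hxy
  refine ⟨v, hinj, ?_, ?_, ?_⟩
  · rw [Finset.image_erase hinj, himg, hvr, Finset.erase_insert hue]
    exact he
  · rw [Finset.image_erase hinj, himg, hvr1, Finset.erase_insert_of_ne hua']
    exact heA
  · rw [Finset.image_erase hinj, himg, hvr2, Finset.erase_insert_of_ne hub']
    exact heB
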